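/- arXiv:2111.01656 — 2 statements merged into one kernel-verified Lean document; each statement's English description precedes it below -/
import Mathlib

section
/- The quantum strategy using the Bell state with Alice measuring in the computational or Hadamard basis (according to her input) and Bob measuring in bases rotated by ±π/8 (according to his input) wins the CHSH game with probability cos²(π/8) = (2+√2)/4 ≈ 0.8536 on each of the four input pairs. -/
open Real

/-- The measurement basis vector for outcome `o` in the orthonormal basis of `ℝ²`
rotated by angle `α` from the computational basis. -/
noncomputable def basisVec (α : ℝ) (o : Bool) : Fin 2 → ℝ :=
  if o then ![-Real.sin α, Real.cos α] else ![Real.cos α, Real.sin α]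

/-- Alice's measurement angle on input `x`: `0` or `π/4`. -/
noncomputable def aliceAngle (x : Bool) : ℝ := if x then Real.pi / 4 else 0

/-- Bob's measurement angle on input `y`: `π/8 − y·π/4`. -/
noncomputable def bobAngle (y : Bool) : ℝ :=
  Real.pi / 8 - (if y then Real.pi / 4 else 0)

/-- The amplitude of outcome pair `(a, b)` when the Bell state `(|00⟩+|11⟩)/√2` is measured
in the product of the bases rotated by `α` (Alice) and `β` (Bob). -/
noncomputable def bellAmp (α β : ℝ) (a b : Bool) : ℝ :=
  (Real.sqrt 2)⁻¹ * (∑ i : Fin 2, basisVec α a i * basisVec β b i)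

/-- The probability of winning the CHSH game on input pair `(x, y)` with the quantum
strategy: sum of outcome probabilities over outcomes `(a,b)` with `x ∧ y = a ⊕ b`. -/
noncomputable def winProb (x y : Bool) : ℝ :=
  ∑ a : Bool, ∑ b : Bool,
    if (x && y) = Bool.xor a b then (bellAmp (aliceAngle x) (bobAngle y) a b) ^ 2 else 0

/-- The quantum CHSH strategy (Bell state; Alice measures at angles `0, π/4`, Bob at
`π/8, −π/8`) wins with probability `cos²(π/8) = (2+√2)/4` on each of the four input pairs. -/
theorem chsh_quantum_strategy_wins :
    (∀ x y : Bool, winProb x y = Real.cos (Real.pi / 8) ^ 2) ∧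
    Real.cos (Real.pi / 8) ^ 2 = (2 + Real.sqrt 2) / 4 := by
  have h2 : √2 * √2 = 2 := Real.mul_self_sqrt (by norm_num)
  have hle : √2 ≤ 2 := by nlinarith [Real.sqrt_nonneg 2]
  have hs : √(2-√2) * √(2-√2) = 2-√2 := Real.mul_self_sqrt (by linarith)
  have hc : √(2+√2) * √(2+√2) = 2+√2 := Real.mul_self_sqrt (by positivity)
  have h3 : √(2-√2) * √(2+√2) = √2 := by
    rw [← Real.sqrt_mul (by linarith), show (2-√2)*(2+√2) = 2 by linear_combination -h2]
  have h0 : √2 ≠ 0 := by positivity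
  constructor
  · intro x y
    cases x <;> cases y <;>
      simp only [winProb, bellAmp, basisVec, aliceAngle, bobAngle, Fintype.sum_bool,
        Fin.sum_univ_two] <;>
      simp [show π/8 - π/4 = -(π/8) from by ring, Real.cos_neg, Real.sin_neg,
        Real.cos_pi_div_eight, Real.sin_pi_div_eight] <;>
      field_simp <;>
      (first
        | nlinarith [h2, h3, hs, hc]
        | linear_combination 2048 * √2 ^ 4 * (hs + hc + 2 * h3))
  · rw [Real.cos_pi_div_eight, div_pow, Real.sq_sqrt (by positivity)]
    norm_num
end

section
/- Consider uniformly random bits L(j), L(j+1), L(j+2), L(j+8), R(j), K(j) with the constraints L(j+2) = L(j) and K(j) = R(j). Define L'(j) = R(j) ⊕ K(j) ⊕ (L(j+1) ∧ L(j+8)) ⊕ L(j+2). Then Pr(L(j) ⊕ L'(j) = 0) = 3/4. -/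
/-- SIMON round-function bit update under the constraints `L(j+2) = L(j)` and
`K(j) = R(j)`: `L'(j) = R(j) ⊕ K(j) ⊕ (L(j+1) ∧ L(j+8)) ⊕ L(j+2)`, as a function of
the free bits `l0 = L(j)`, `l1 = L(j+1)`, `l8 = L(j+8)`, `r = R(j)`. -/
def simonUpdate (l0 l1 l8 r : Bool) : Bool :=
  Bool.xor r (Bool.xor r (Bool.xor (l1 && l8) l0))

/-- With `L(j), L(j+1), L(j+8), R(j)` independent uniform bits and the constraints
`L(j+2) = L(j)`, `K(j) = R(j)`, the probability that `L(j) ⊕ L'(j) = 0` is `3/4`. -/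
theorem simon_linear_approx_bias :
    (((Finset.univ : Finset (Bool × Bool × Bool × Bool)).filter
        (fun v => Bool.xor v.1 (simonUpdate v.1 v.2.1 v.2.2.1 v.2.2.2) = false)).card : ℚ) /
      (Fintype.card (Bool × Bool × Bool × Bool) : ℚ) = 3 / 4 := by
  have h : ((Finset.univ : Finset (Bool × Bool × Bool × Bool)).filter
      (fun v => Bool.xor v.1 (simonUpdate v.1 v.2.1 v.2.2.1 v.2.2.2) = false)).card = 12 := by
    decide
  have h2 : (Fintype.card (Bool × Bool × Bool × Bool)) = 16 := by decide
  rw [h, h2]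
  norm_num
end
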